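/- Let X be a finite connected Alexander quandle and let e be the minimal positive integer with (T^e − 1)X = 0. Then the map sending (ε, x) ∈ Z/eZ ⋉ X to the permutation y ↦ T^ε y + (1−T)x of X is a group isomorphism from the semidirect product Z/eZ ⋉ X onto Inn(X), where ε ∈ Z/eZ acts on the additive group X by x ↦ T^ε x. -/

import Mathlib

open scoped Topology TensorProduct

/-- A quandle: a set with a binary operation `op` (written `x * y` in the paper) such that
every element is idempotent, the operation is right self-distributive, and every right
translation is a bijection. -/
structure QuandleStruct (X : Type*) where
  op : X → X → X
  idem : ∀ x, op x x = x
  distrib : ∀ x y z, op (op x y) z = op (op x z) (op y z)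
  rightBij : ∀ y, Function.Bijective fun x => op x y

namespace QuandleStruct

variable {X : Type*} (Q : QuandleStruct X)

/-- The right translation by `y`, as a permutation of `X`. -/
noncomputable def rightTransl (y : X) : Equiv.Perm X :=
  Equiv.ofBijective _ (Q.rightBij y)

@[simp] lemma rightTransl_apply (y x : X) : Q.rightTransl y x = Q.op x y := rfl

/-- The inner automorphism group of a quandle: the subgroup of the permutation
group generated by all right translations. -/
noncomputable def Inn : Subgroup (Equiv.Perm X) :=
  Subgroup.closure (Set.range Q.rightTransl)

/-- A tuple is degenerate when two consecutive entries are equal. -/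
def IsDeg {n : ℕ} (f : Fin n → X) : Prop :=
  ∃ i : Fin n, ∃ h : (i : ℕ) + 1 < n, f i = f ⟨(i : ℕ) + 1, h⟩

/-- `n`-chains of the rack complex with trivial coefficients: the free abelian
group on `X^n`. -/
abbrev CR (n : ℕ) : Type _ := FreeAbelianGroup (Fin n → X)

/-- The boundary `∂_{n+1} : C_{n+1}^R → C_n^R` of the rack complex,
`∂(x₁,…,x_{n+1}) = Σᵢ (-1)ⁱ ((x₁*xᵢ,…,x_{i-1}*xᵢ,x_{i+1},…) - (x₁,…,x_{i-1},x_{i+1},…))`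
(1-indexed signs). -/
noncomputable def dR (n : ℕ) : (CR (X := X) (n + 1)) →+ CR (X := X) n :=
  FreeAbelianGroup.lift fun f =>
    ∑ i : Fin (n + 1),
      ((-1 : ℤ) ^ ((i : ℕ) + 1)) •
        (FreeAbelianGroup.of (i.removeNth fun j => if (j : ℕ) < (i : ℕ) then Q.op (f j) (f i) else f j)
          - FreeAbelianGroup.of (i.removeNth f))

open Classical in
/-- The projection killing the degenerate basis elements. -/
noncomputable def projQ (n : ℕ) : (CR (X := X) n) →+ FreeAbelianGroup {f : Fin n → X // ¬ IsDeg f} :=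
  FreeAbelianGroup.lift fun f => if h : IsDeg f then 0 else FreeAbelianGroup.of ⟨f, h⟩

/-- `n`-chains of the quandle complex: the quotient of the rack complex by the degenerate
subcomplex, realized as the free abelian group on nondegenerate tuples. -/
abbrev CQ (n : ℕ) : Type _ := FreeAbelianGroup {f : Fin n → X // ¬ IsDeg f}

noncomputable def inclQ (n : ℕ) : (CQ (X := X) n) →+ CR (X := X) n :=
  FreeAbelianGroup.lift fun f => FreeAbelianGroup.of f.1

/-- The boundary of the quandle complex (the map induced by `dR` on the quotient
by the degenerate subcomplex). -/
noncomputable def dQ (n : ℕ) : (CQ (X := X) (n + 1)) →+ CQ (X := X) n :=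
  (projQ n).comp ((Q.dR n).comp (inclQ (n + 1)))

/-- The boundary `∂_n : C_n^Q → C_{n-1}^Q` (with `∂₀ = 0`). -/
noncomputable def DQ : ∀ n : ℕ, (CQ (X := X) n) →+ CQ (X := X) (n - 1)
  | 0 => 0
  | (n + 1) => Q.dQ n

/-- The `n`-th quandle homology group `H_n^Q(X;ℤ)`: cycles modulo boundaries in the
quandle complex. -/
noncomputable def HQ (n : ℕ) : Type _ :=
  (Q.DQ n).ker ⧸ ((Q.dQ n).range.addSubgroupOf (Q.DQ n).ker)

noncomputable instance (n : ℕ) : AddCommGroup (Q.HQ n) :=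
  QuotientAddGroup.Quotient.addCommGroup _

/-- The `n`-th rack homology group `H_n^R(X;ℤ)`. -/
noncomputable def DR : ∀ n : ℕ, (CR (X := X) n) →+ CR (X := X) (n - 1)
  | 0 => 0
  | (n + 1) => Q.dR n

noncomputable def HR (n : ℕ) : Type _ :=
  (Q.DR n).ker ⧸ ((Q.dR n).range.addSubgroupOf (Q.DR n).ker)

noncomputable instance (n : ℕ) : AddCommGroup (Q.HR n) :=
  QuotientAddGroup.Quotient.addCommGroup _

end QuandleStruct

namespace QuandleStruct

variable {X : Type*} (Q : QuandleStruct X)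

/-- The right translation by `y` as an element of the inner automorphism group. -/
noncomputable def innTransl (y : X) : Q.Inn :=
  ⟨Q.rightTransl y, Subgroup.subset_closure ⟨y, rfl⟩⟩

/-- `n`-chains of the rack complex with coefficients in `ℤ[Inn(X)]`: the free abelian group
on `Inn(X) × X^n`. -/
abbrev CRG (n : ℕ) : Type _ := FreeAbelianGroup (Q.Inn × (Fin n → X))

/-- The boundary of the rack complex with coefficients in `ℤ[Inn(X)]`:
`∂(g;x₁,…,x_{n+1}) = Σᵢ (-1)ⁱ ((g·x̄ᵢ; x₁*xᵢ,…,x_{i-1}*xᵢ,x_{i+1},…) - (g; x₁,…,x_{i-1},x_{i+1},…))`. -/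
noncomputable def dRG (n : ℕ) : (Q.CRG (n + 1)) →+ Q.CRG n :=
  FreeAbelianGroup.lift fun gf =>
    ∑ i : Fin (n + 1),
      ((-1 : ℤ) ^ ((i : ℕ) + 1)) •
        (FreeAbelianGroup.of (gf.1 * Q.innTransl (gf.2 i),
            i.removeNth fun j => if (j : ℕ) < (i : ℕ) then Q.op (gf.2 j) (gf.2 i) else gf.2 j)
          - FreeAbelianGroup.of (gf.1, i.removeNth gf.2))

noncomputable def DRG : ∀ n : ℕ, (Q.CRG n) →+ Q.CRG (n - 1)
  | 0 => 0
  | (n + 1) => Q.dRG n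

/-- The `n`-th rack homology group `H_n^R(X;ℤ[Inn X])`. -/
noncomputable def HRG (n : ℕ) : Type _ :=
  (Q.DRG n).ker ⧸ ((Q.dRG n).range.addSubgroupOf (Q.DRG n).ker)

noncomputable instance (n : ℕ) : AddCommGroup (Q.HRG n) :=
  QuotientAddGroup.Quotient.addCommGroup _

/-- `n`-chains of the quandle complex with coefficients in `ℤ[Inn(X)]`. -/
abbrev CQG (n : ℕ) : Type _ := FreeAbelianGroup (Q.Inn × {f : Fin n → X // ¬ IsDeg f})

open Classical in
noncomputable def projQG (n : ℕ) : (Q.CRG n) →+ Q.CQG n :=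
  FreeAbelianGroup.lift fun gf =>
    if h : IsDeg gf.2 then 0 else FreeAbelianGroup.of (gf.1, ⟨gf.2, h⟩)

noncomputable def inclQG (n : ℕ) : (Q.CQG n) →+ Q.CRG n :=
  FreeAbelianGroup.lift fun gf => FreeAbelianGroup.of (gf.1, gf.2.1)

noncomputable def dQG (n : ℕ) : (Q.CQG (n + 1)) →+ Q.CQG n :=
  (Q.projQG n).comp ((Q.dRG n).comp (Q.inclQG (n + 1)))

noncomputable def DQG : ∀ n : ℕ, (Q.CQG n) →+ Q.CQG (n - 1)
  | 0 => 0
  | (n + 1) => Q.dQG n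

/-- The `n`-th quandle homology group `H_n^Q(X;ℤ[Inn X])`. -/
noncomputable def HQG (n : ℕ) : Type _ :=
  (Q.DQG n).ker ⧸ ((Q.dQG n).range.addSubgroupOf (Q.DQG n).ker)

noncomputable instance (n : ℕ) : AddCommGroup (Q.HQG n) :=
  QuotientAddGroup.Quotient.addCommGroup _

/-- A tuple is "late-degenerate" when `x_i = x_{i+1}` for some `i ≥ 2` (1-indexed),
i.e. for some `i ≥ 1` in 0-indexed notation. -/
def IsLate {n : ℕ} (f : Fin n → X) : Prop :=
  ∃ i : Fin n, 1 ≤ (i : ℕ) ∧ ∃ h : (i : ℕ) + 1 < n, f i = f ⟨(i : ℕ) + 1, h⟩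

/-- `n`-chains of the subcomplex `C_*^L`, spanned by late-degenerate tuples. -/
abbrev CL (n : ℕ) : Type _ := FreeAbelianGroup {f : Fin n → X // IsLate f}

open Classical in
noncomputable def projL (n : ℕ) : (CR (X := X) n) →+ CL (X := X) n :=
  FreeAbelianGroup.lift fun f => if h : IsLate f then FreeAbelianGroup.of ⟨f, h⟩ else 0

noncomputable def inclL (n : ℕ) : (CL (X := X) n) →+ CR (X := X) n :=
  FreeAbelianGroup.lift fun f => FreeAbelianGroup.of f.1

/-- The boundary of the subcomplex `C_*^L` (the restriction of the rack boundary). -/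
noncomputable def dL (n : ℕ) : (CL (X := X) (n + 1)) →+ CL (X := X) n :=
  (projL n).comp ((Q.dR n).comp (inclL (n + 1)))

noncomputable def DL : ∀ n : ℕ, (CL (X := X) n) →+ CL (X := X) (n - 1)
  | 0 => 0
  | (n + 1) => Q.dL n

/-- The `n`-th homology group `H_n^L(X;ℤ)` of the subcomplex `C_*^L`. -/
noncomputable def HL (n : ℕ) : Type _ :=
  (Q.DL n).ker ⧸ ((Q.dL n).range.addSubgroupOf (Q.DL n).ker)

noncomputable instance (n : ℕ) : AddCommGroup (Q.HL n) :=
  QuotientAddGroup.Quotient.addCommGroup _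

end QuandleStruct

/-- The group structure on `AddAut A` by composition, as in the older library (where `AddAut A`
was a multiplicative group). -/
instance AddAut.groupOld (A : Type*) [Add A] : Group (AddAut A) where
  mul g h := AddEquiv.trans h g
  one := AddEquiv.refl _
  inv := AddEquiv.symm
  mul_assoc _ _ _ := rfl
  one_mul _ := rfl
  mul_one _ := rfl
  inv_mul_cancel := AddEquiv.self_trans_symm

section Alexander

variable {X : Type*} [AddCommGroup X]

/-- The Alexander quandle associated to an automorphism `T` of an abelian group `X`
(i.e. to a `ℤ[T,T⁻¹]`-module structure on `X`): `x * y = T x + (1 - T) y`. -/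
def alexanderOp (T : AddAut X) : QuandleStruct X where
  op x y := T x + (y - T y)
  idem x := by simp
  distrib x y z := by
    simp only [map_add, map_sub]
    abel
  rightBij y := by
    refine Function.bijective_iff_has_inverse.2 ⟨fun z => T.symm (z - (y - T y)), ?_, ?_⟩
    · intro x; simp
    · intro x; simp

/-- A finite Alexander quandle is connected iff `(1-T)X = X`, i.e. `x ↦ x - T x` is
surjective. -/
def AlexConnected (T : AddAut X) : Prop :=
  Function.Surjective fun x => x - T x

/-- A finite Alexander quandle is regular when it is connected and the minimal `e ≥ 1`
with `(Tᵉ - 1)X = 0` (i.e. the order of `T`) is coprime to `|X|`. -/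
def AlexRegular (T : AddAut X) : Prop :=
  AlexConnected T ∧ Nat.Coprime (orderOf T) (Nat.card X)

end Alexander

/-- The Alexander quandle on a field `F` given by `x * y = ω x + (1 - ω) y`, for `ω ≠ 0`. -/
def alexanderField {F : Type*} [Field F] (ω : F) (hω : ω ≠ 0) : QuandleStruct F where
  op x y := ω * x + (1 - ω) * y
  idem x := by ring
  distrib x y z := by ring
  rightBij y := by
    refine Function.bijective_iff_has_inverse.2 ⟨fun z => ω⁻¹ * (z - (1 - ω) * y), ?_, ?_⟩
    · intro x
      field_simp
      ring
    · intro x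
      field_simp
      ring

/-- The dihedral quandle on `ℤ/mℤ`: `x * y = 2y - x`. -/
def dihedral (m : ℕ) : QuandleStruct (ZMod m) where
  op x y := 2 * y - x
  idem x := by ring
  distrib x y z := by ring
  rightBij y := by
    have : Function.Involutive fun x : ZMod m => 2 * y - x := fun x => by ring
    exact this.bijective
namespace QuandleStruct

variable {X : Type*} (Q : QuandleStruct X)

/-- The relations of the associated group `As(X)`: `x · y = y · (x*y)`. -/
def asRels : Set (FreeGroup X) :=
  {w | ∃ x y : X,
    w = FreeGroup.of x * FreeGroup.of y * (FreeGroup.of y * FreeGroup.of (Q.op x y))⁻¹}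

/-- The associated group `As(X)` of a quandle: generated by the elements of `X` subject to
the relations `x · y = y · (x*y)`. -/
def asGroup : Type _ := PresentedGroup Q.asRels

noncomputable instance : Group Q.asGroup :=
  inferInstanceAs (Group (PresentedGroup Q.asRels))

/-- The natural homomorphism `As(X) → Inn(X)` sending the generator corresponding to `x` to
the right translation by `x` (valued in the opposite group, which accounts for the
composition convention on permutations). -/
noncomputable def asToInn : Q.asGroup →* (Q.Inn)ᵐᵒᵖ :=
  PresentedGroup.toGroup (f := fun x => MulOpposite.op (Q.innTransl x)) (by
    rintro r ⟨x, y, rfl⟩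
    rw [map_mul, map_mul, map_inv, map_mul]
    simp only [FreeGroup.lift_apply_of]
    rw [mul_inv_eq_one]
    rw [← MulOpposite.op_mul, ← MulOpposite.op_mul]
    congr 1
    ext z
    show (((Q.innTransl y : Q.Inn) : Equiv.Perm X) * ((Q.innTransl x : Q.Inn) : Equiv.Perm X)) z
      = (((Q.innTransl (Q.op x y) : Q.Inn) : Equiv.Perm X) * ((Q.innTransl y : Q.Inn) : Equiv.Perm X)) z
    simp only [Equiv.Perm.mul_apply, innTransl, rightTransl_apply]
    exact Q.distrib z x y)

end QuandleStruct

section TAct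

variable {X : Type*} [AddCommGroup X]

lemma pow_mod_of_pow_eq_one {G : Type*} [Group G] {T : G} {e : ℕ} (he : T ^ e = 1) (n : ℕ) :
    T ^ (n % e) = T ^ n := by
  conv_rhs => rw [← Nat.div_add_mod n e]
  rw [pow_add, pow_mul, he, one_pow, one_mul]

/-- The action of `ℤ/eℤ` on `X` by powers of `T`, as a homomorphism into the automorphisms
of `Multiplicative X`. -/
noncomputable def tAct (T : AddAut X) (e : ℕ) [NeZero e] (he : T ^ e = 1) :
    Multiplicative (ZMod e) →* MulAut (Multiplicative X) where
  toFun ε := AddEquiv.toMultiplicative (T ^ (Multiplicative.toAdd ε).val : AddAut X)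
  map_one' := by
    show AddEquiv.toMultiplicative
        (T ^ (Multiplicative.toAdd (1 : Multiplicative (ZMod e))).val : AddAut X) = 1
    have h0 : (Multiplicative.toAdd (1 : Multiplicative (ZMod e))).val = 0 := by
      simp [ZMod.val_zero]
    rw [h0, pow_zero]
    rfl
  map_mul' a b := by
    show AddEquiv.toMultiplicative (T ^ (Multiplicative.toAdd (a * b)).val : AddAut X)
      = AddEquiv.toMultiplicative (T ^ (Multiplicative.toAdd a).val : AddAut X)
        * AddEquiv.toMultiplicative (T ^ (Multiplicative.toAdd b).val : AddAut X)
    have hab : (Multiplicative.toAdd (a * b)).val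
        = ((Multiplicative.toAdd a).val + (Multiplicative.toAdd b).val) % e := by
      simp [ZMod.val_add]
    rw [hab, pow_mod_of_pow_eq_one he, pow_add]
    rfl

end TAct

namespace InnIsoAux

variable {X : Type} [AddCommGroup X] (T : AddAut X)

/-- The candidate permutation `y ↦ T^k y + (x - T x)`. -/
def P (x : X) (k : ℕ) : Equiv.Perm X :=
  ((T ^ k : AddAut X) : X ≃+ X).toEquiv.trans (Equiv.addRight (x - T x))

@[simp] lemma P_apply (x : X) (k : ℕ) (y : X) : P T x k y = (T ^ k) y + (x - T x) := rfl

lemma toAdd_tAct (e : ℕ) [NeZero e] (he : T ^ e = 1) (ε : Multiplicative (ZMod e))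
    (l : Multiplicative X) :
    Multiplicative.toAdd ((tAct T e he ε) l)
      = (T ^ (Multiplicative.toAdd ε).val) (Multiplicative.toAdd l) := rfl

/-- The homomorphism from the semidirect product to the permutation group. -/
noncomputable def phi (e : ℕ) [NeZero e] (he : T ^ e = 1) :
    (Multiplicative X ⋊[tAct T e he] Multiplicative (ZMod e)) →* Equiv.Perm X where
  toFun p := P T (Multiplicative.toAdd p.left) (Multiplicative.toAdd p.right).val
  map_one' := by
    ext y
    simp [P_apply]
    rfl
  map_mul' p q := by
    ext y
    have hleft : Multiplicative.toAdd (p * q).left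
        = Multiplicative.toAdd p.left
          + (T ^ (Multiplicative.toAdd p.right).val) (Multiplicative.toAdd q.left) := by
      rw [SemidirectProduct.mul_left, toAdd_mul, toAdd_tAct]
    have hright : (Multiplicative.toAdd (p * q).right).val
        = ((Multiplicative.toAdd p.right).val + (Multiplicative.toAdd q.right).val) % e := by
      rw [SemidirectProduct.mul_right, toAdd_mul, ZMod.val_add]
    set a := (Multiplicative.toAdd p.right).val
    set b := (Multiplicative.toAdd q.right).val
    set x1 := Multiplicative.toAdd p.left
    set x2 := Multiplicative.toAdd q.left
    have hpow : (T ^ ((a + b) % e) : AddAut X) = T ^ a * T ^ b := by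
      rw [pow_mod_of_pow_eq_one he, pow_add]
    have hcomm : T * T ^ a = T ^ a * T := (Commute.self_pow T a).eq
    show P T (Multiplicative.toAdd (p*q).left) (Multiplicative.toAdd (p*q).right).val y
        = (P T x1 a * P T x2 b) y
    calc P T (Multiplicative.toAdd (p*q).left) (Multiplicative.toAdd (p*q).right).val y
        = (T ^ ((a + b) % e)) y + ((x1 + (T ^ a) x2) - T (x1 + (T ^ a) x2)) := by
          rw [hleft, hright, P_apply]
      _ = (T ^ a) ((T ^ b) y + (x2 - T x2)) + (x1 - T x1) := by
          rw [hpow]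
          have h1 : ((T ^ a * T ^ b : AddAut X)) y = (T ^ a) ((T ^ b) y) := rfl
          have h2 : T ((T ^ a) x2) = (T ^ a) (T x2) := by
            have := congrArg (fun (g : AddAut X) => g x2) hcomm
            exact this
          rw [h1, map_add, map_add, h2, map_sub]
          abel
      _ = (P T x1 a * P T x2 b) y := rfl

/-- The inverse of right translation at 0 is `T.symm`. -/
lemma rt0_apply (y : X) : (alexanderOp T).rightTransl 0 y = T y := by
  rw [QuandleStruct.rightTransl_apply]
  show T y + (0 - T 0) = T y
  simp

lemma rt0_pow (k : ℕ) : ∀ y : X, (((alexanderOp T).rightTransl 0) ^ k) y = (T ^ k) y := by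
  induction k with
  | zero => intro y; simp; rfl
  | succ n ih =>
    intro y
    rw [pow_succ', Equiv.Perm.mul_apply, ih, rt0_apply, pow_succ']
    rfl

lemma rt0_inv (y : X) : (((alexanderOp T).rightTransl 0))⁻¹ y = T.symm y := by
  apply ((alexanderOp T).rightTransl 0).injective
  rw [show ∀ f : Equiv.Perm X, f (f⁻¹ y) = y from fun f => f.apply_symm_apply y, rt0_apply]
  simp

end InnIsoAux

/-- Let `X` be a finite connected Alexander quandle and `e` the minimal positive integer
with `(Tᵉ - 1)X = 0`. Then `(ε, x) ↦ (y ↦ Tᵉ y + (1-T)x)` is a group isomorphism from the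
semidirect product `ℤ/eℤ ⋉ X` (with `ε` acting by `Tᵉ`) onto `Inn(X)`. -/
theorem inn_iso_semidirect {X : Type} [AddCommGroup X] [Finite X] (T : AddAut X)
    (hconn : AlexConnected T) (e : ℕ) [NeZero e] (he : T ^ e = 1)
    (hmin : ∀ k : ℕ, 0 < k → T ^ k = 1 → e ≤ k) :
    ∃ ψ : (Multiplicative X ⋊[tAct T e he] Multiplicative (ZMod e))
        ≃* ↥(alexanderOp T).Inn,
      ∀ (x : X) (ε : ZMod e) (y : X),
        ((ψ ⟨Multiplicative.ofAdd x, Multiplicative.ofAdd ε⟩ : ↥(alexanderOp T).Inn)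
            : Equiv.Perm X) y
          = (T ^ ε.val) y + (x - T x) := by
  classical
  open InnIsoAux in
  set φ := phi T e he with hφ
  -- every value of φ lies in Inn
  have hmem : ∀ p, φ p ∈ (alexanderOp T).Inn := by
    intro p
    have hdecomp : φ p = (alexanderOp T).rightTransl (Multiplicative.toAdd p.left)
        * ((alexanderOp T).rightTransl 0)⁻¹
        * ((alexanderOp T).rightTransl 0) ^ (Multiplicative.toAdd p.right).val := by
      ext y
      rw [Equiv.Perm.mul_apply, Equiv.Perm.mul_apply, rt0_pow, rt0_inv,
        QuandleStruct.rightTransl_apply]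
      show (T ^ (Multiplicative.toAdd p.right).val) y
          + (Multiplicative.toAdd p.left - T (Multiplicative.toAdd p.left))
        = T (T.symm ((T ^ (Multiplicative.toAdd p.right).val) y))
          + (Multiplicative.toAdd p.left - T (Multiplicative.toAdd p.left))
      rw [AddEquiv.apply_symm_apply]
    rw [hdecomp]
    have h1 : ∀ z : X, (alexanderOp T).rightTransl z ∈ (alexanderOp T).Inn := fun z =>
      Subgroup.subset_closure ⟨z, rfl⟩
    exact mul_mem (mul_mem (h1 _) (inv_mem (h1 0))) (pow_mem (h1 0) _)
  -- the generators are values of φ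
  have hT1 : (T ^ (1 : ZMod e).val : AddAut X) = T := by
    rw [ZMod.val_one_eq_one_mod, pow_mod_of_pow_eq_one he, pow_one]
  have hgen : ∀ z : X, (alexanderOp T).rightTransl z
      = φ ⟨Multiplicative.ofAdd z, Multiplicative.ofAdd 1⟩ := by
    intro z
    ext y
    rw [QuandleStruct.rightTransl_apply]
    show T y + (z - T z) = (T ^ (1 : ZMod e).val) y + (z - T z)
    rw [hT1]
  -- injectivity
  have hsubinj : Function.Injective fun x : X => x - T x :=
    Finite.injective_iff_surjective.2 hconn
  have hinj : Function.Injective φ := by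
    refine (injective_iff_map_eq_one φ).2 fun p hp => ?_
    have h0 : φ p 0 = 0 := by rw [hp]; rfl
    have hx0 : Multiplicative.toAdd p.left - T (Multiplicative.toAdd p.left) = 0 := by
      have := h0
      rw [show φ p 0 = (T ^ (Multiplicative.toAdd p.right).val) 0
          + (Multiplicative.toAdd p.left - T (Multiplicative.toAdd p.left)) from rfl,
        map_zero, zero_add] at this
      exact this
    have hxl : Multiplicative.toAdd p.left = 0 := by
      apply hsubinj
      simpa using hx0
    have hTk : (T ^ (Multiplicative.toAdd p.right).val : AddAut X) = 1 := by
      ext y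
      have := congrArg (fun f : Equiv.Perm X => f y) hp
      simp only [Equiv.Perm.one_apply] at this
      rw [show φ p y = (T ^ (Multiplicative.toAdd p.right).val) y
          + (Multiplicative.toAdd p.left - T (Multiplicative.toAdd p.left)) from rfl,
        hx0, add_zero] at this
      exact this
    have hk0 : (Multiplicative.toAdd p.right).val = 0 := by
      by_contra hk
      have hpos : 0 < (Multiplicative.toAdd p.right).val := Nat.pos_of_ne_zero hk
      have := hmin _ hpos hTk
      exact absurd this (not_le.2 (ZMod.val_lt _))
    have hr : Multiplicative.toAdd p.right = 0 := (ZMod.val_eq_zero _).1 hk0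
    have hl' : p.left = 1 := by
      have : Multiplicative.toAdd p.left = Multiplicative.toAdd (1 : Multiplicative X) := hxl
      exact Multiplicative.toAdd.injective this
    have hr' : p.right = 1 := by
      have : Multiplicative.toAdd p.right = Multiplicative.toAdd (1 : Multiplicative (ZMod e)) := hr
      exact Multiplicative.toAdd.injective this
    cases p with
    | mk l r => simp only at hl' hr'; rw [hl', hr']; rfl
  -- the restricted hom
  let φ' := φ.codRestrict (alexanderOp T).Inn hmem
  have hinj' : Function.Injective φ' := fun a b h =>
    hinj (Subtype.ext_iff.1 h)
  have hsurj' : Function.Surjective φ' := by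
    rintro ⟨g, hg⟩
    have hle : (alexanderOp T).Inn ≤ φ.range := by
      rw [QuandleStruct.Inn]
      refine (Subgroup.closure_le _).2 ?_
      rintro _ ⟨z, rfl⟩
      exact ⟨⟨Multiplicative.ofAdd z, Multiplicative.ofAdd 1⟩, (hgen z).symm⟩
    obtain ⟨p, hp⟩ := hle hg
    exact ⟨p, Subtype.ext hp⟩
  refine ⟨MulEquiv.ofBijective φ' ⟨hinj', hsurj'⟩, fun x ε y => rfl⟩
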